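/- Let X = [0,∞) with the usual metric, and define f, g : X → X by f(x) = x², and g(x) = x + 2 if x ∈ [0,4] ∪ (9,∞), g(x) = x + 12 if x ∈ (4,9]. Then the pair (f,g) is subcompatible (the sequence xₙ = 2 + 1/n is a witness), but f and g are not occasionally weakly compatible: there is no point x ∈ X with f(x) = g(x) and f(g(x)) = g(f(x)). -/

import Mathlib

open Filter Topology NNReal

/-- On `X = [0,∞)` (modelled as `ℝ≥0` with its usual metric), with
`f x = x²` and `g x = x + 2` on `[0,4] ∪ (9,∞)`, `g x = x + 12` on `(4,9]`,
the pair `(f, g)` is subcompatible — the sequence `xₙ = 2 + 1/n` (here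
indexed as `2 + 1/(n+1)`) witnesses this with limit `t = 4` — but `f` and `g`
are not occasionally weakly compatible. -/
theorem subcompatible_not_owc
    (f g : ℝ≥0 → ℝ≥0)
    (hf : ∀ x : ℝ≥0, f x = x ^ 2)
    (hg1 : ∀ x : ℝ≥0, x ≤ 4 ∨ 9 < x → g x = x + 2)
    (hg2 : ∀ x : ℝ≥0, 4 < x → x ≤ 9 → g x = x + 12) :
    (Tendsto (fun n : ℕ => f (2 + 1 / (n + 1 : ℝ≥0))) atTop (𝓝 (4 : ℝ≥0)) ∧
     Tendsto (fun n : ℕ => g (2 + 1 / (n + 1 : ℝ≥0))) atTop (𝓝 (4 : ℝ≥0)) ∧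
     Tendsto (fun n : ℕ =>
       dist (f (g (2 + 1 / (n + 1 : ℝ≥0)))) (g (f (2 + 1 / (n + 1 : ℝ≥0)))))
       atTop (𝓝 (0 : ℝ))) ∧
    ¬ ∃ x : ℝ≥0, f x = g x ∧ f (g x) = g (f x) := by
  -- the basic sequence
  set e : ℕ → ℝ≥0 := fun n => 1 / (n + 1 : ℝ≥0) with he
  have hepos : ∀ n, 0 < e n := by
    intro n
    simp [he]
  have hele : ∀ n, e n ≤ 1 := by
    intro n
    simp only [he, one_div]
    rw [inv_le_one_iff₀]
    right
    exact le_add_self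
  have hx4 : ∀ n, (2 + e n : ℝ≥0) ≤ 4 := by
    intro n
    calc (2 + e n : ℝ≥0) ≤ 2 + 1 := by gcongr; exact hele n
    _ ≤ 4 := by norm_num
  have he0 : Tendsto e atTop (𝓝 (0 : ℝ≥0)) := by
    rw [← NNReal.tendsto_coe]
    have : (fun n : ℕ => ((e n : ℝ≥0) : ℝ)) = fun n : ℕ => 1 / ((n : ℝ) + 1) := by
      funext n; simp [he]
    rw [this]
    exact tendsto_one_div_add_atTop_nhds_zero_nat
  -- values of g and f along the sequence
  have hgx : ∀ n, g (2 + e n) = (2 + e n) + 2 := fun n => hg1 _ (Or.inl (hx4 n))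
  have hx2lo : ∀ n, (4 : ℝ≥0) < (2 + e n) ^ 2 := by
    intro n
    have : (2 : ℝ≥0) < 2 + e n := lt_add_of_pos_right _ (hepos n)
    calc (4 : ℝ≥0) = 2 ^ 2 := by norm_num
    _ < (2 + e n) ^ 2 := by gcongr
  have hx2hi : ∀ n, (2 + e n) ^ 2 ≤ 9 := by
    intro n
    calc (2 + e n) ^ 2 ≤ 3 ^ 2 := by
          gcongr
          calc (2 + e n : ℝ≥0) ≤ 2 + 1 := by gcongr; exact hele n
          _ = 3 := by norm_num
    _ = 9 := by norm_num
  constructor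
  · refine ⟨?_, ?_, ?_⟩
    · simp only [hf]
      show Tendsto (fun n : ℕ => (2 + e n) ^ 2) atTop (𝓝 (4 : ℝ≥0))
      rw [show (4 : ℝ≥0) = (2 + 0) ^ 2 from by norm_num]
      exact (tendsto_const_nhds.add he0).pow 2
    · show Tendsto (fun n : ℕ => g (2 + e n)) atTop (𝓝 (4 : ℝ≥0))
      simp only [hgx]
      rw [show (4 : ℝ≥0) = 2 + 0 + 2 from by norm_num]
      exact (tendsto_const_nhds.add he0).add tendsto_const_nhds
    · have key : ∀ n, dist (f (g (2 + e n))) (g (f (2 + e n))) = 4 * ((e n : ℝ)) := by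
        intro n
        rw [hgx, hf, hf, hg2 _ (hx2lo n) (hx2hi n), NNReal.dist_eq]
        push_cast
        rw [abs_of_nonneg (by nlinarith [(e n).coe_nonneg])]
        ring
      show Tendsto (fun n : ℕ => dist (f (g (2 + e n))) (g (f (2 + e n)))) atTop (𝓝 (0 : ℝ))
      simp only [key]
      have : Tendsto (fun n : ℕ => 4 * ((e n : ℝ))) atTop (𝓝 (4 * (0 : ℝ))) :=
        (NNReal.tendsto_coe.mpr he0).const_mul 4
      simpa using this
  · rintro ⟨x, h1, h2⟩
    rw [hf] at h1 h2
    by_cases hA : 4 < x ∧ x ≤ 9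
    · rw [hg2 _ hA.1 hA.2] at h1
      have h1' : (x : ℝ) ^ 2 = x + 12 := by exact_mod_cast congrArg NNReal.toReal h1
      have hx4' : (4 : ℝ) < x := by exact_mod_cast hA.1
      nlinarith
    · push_neg at hA
      have hor : x ≤ 4 ∨ 9 < x := by
        by_cases h4 : 4 < x
        · exact Or.inr (hA h4)
        · exact Or.inl (le_of_not_gt h4)
      rw [hg1 _ hor] at h1
      have h1' : (x : ℝ) ^ 2 = x + 2 := by exact_mod_cast congrArg NNReal.toReal h1
      have hx0 : (0 : ℝ) ≤ x := x.coe_nonneg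
      have hx2 : (x : ℝ) = 2 := by nlinarith [sq_nonneg ((x : ℝ) - 2)]
      have hx2' : x = 2 := by exact_mod_cast hx2
      subst hx2'
      rw [hg1 2 (Or.inl (by norm_num)), hf, show ((2 : ℝ≥0) ^ 2) = 4 from by norm_num,
        hg1 4 (Or.inl (by norm_num))] at h2
      norm_num at h2
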